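/- Let A be a finite abelian group equipped with the discrete topology, and let T = ℝ/ℤ be the circle group. Then the group of topological automorphisms of the compact abelian group C = A × T (continuous group automorphisms with continuous inverse) is finite of cardinality 2 · |Aut(A)| · |A|. -/

import Mathlib

open AddCircle Filter

/-! Auxiliary lemmas: classification of continuous endomorphisms of the circle. -/


lemma coe_equivIco_apply' (a : ℝ) (x : AddCircle (1:ℝ)) :
    (((equivIco 1 a x : ℝ)) : AddCircle (1:ℝ)) = x := by
  have h := (equivIco 1 a).symm_apply_apply x
  rw [show (equivIco 1 a).symm ((equivIco 1 a) x)
      = (((equivIco 1 a x : ℝ)) : AddCircle (1:ℝ)) from rfl] at h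
  exact h

lemma torsion_rep {x : AddCircle (1:ℝ)} {n : ℕ} (hn : 0 < n) (hx : n • x = 0) :
    ∃ j : ℤ, x = (((j : ℝ) / n : ℝ) : AddCircle (1:ℝ)) ∧ |(j:ℝ)| / n ≤ 1/2 ∧
      ‖x‖ = |(j:ℝ)| / n := by
  set r : ℝ := ((equivIco 1 (-(1/2)) x : ℝ)) with hr
  have hr_mem : r ∈ Set.Ico (-(1/2) : ℝ) (-(1/2)+1) := (equivIco 1 (-(1/2)) x).2
  have hrx : ((r : ℝ) : AddCircle (1:ℝ)) = x := coe_equivIco_apply' _ x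
  have habs : |r| ≤ 1/2 := by
    rw [abs_le]
    exact ⟨by linarith [hr_mem.1], by linarith [hr_mem.2]⟩
  have h0 : ((n * r : ℝ) : AddCircle (1:ℝ)) = 0 := by
    rw [← hrx, ← AddCircle.coe_nsmul] at hx
    simpa [nsmul_eq_mul] using hx
  obtain ⟨m, hm⟩ := (AddCircle.coe_eq_zero_iff _).mp h0
  rw [zsmul_eq_mul, mul_one] at hm
  have hnR : (0:ℝ) < n := by exact_mod_cast hn
  have hrm : r = (m : ℝ) / n := by field_simp; linarith [hm]
  refine ⟨m, ?_, ?_, ?_⟩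
  · rw [← hrx, hrm]
  · rw [← abs_of_pos hnR, ← abs_div, ← hrm]; exact habs
  · have h2 : |(m:ℝ)| / n = |r| := by rw [hrm, abs_div, abs_of_pos hnR]
    rw [h2, ← hrx]
    exact (AddCircle.norm_coe_eq_abs_iff (p := 1) one_ne_zero).mpr (by simpa using habs)

lemma circle_hom_classify (g : AddCircle (1:ℝ) →+ AddCircle (1:ℝ))
    (hg : Continuous g) (hinj : Function.Injective g) :
    (∀ x, g x = x) ∨ (∀ x, g x = -x) := by
  classical
  -- the basic torsion elements
  set u : ℕ → AddCircle (1:ℝ) := fun k => ((1/2^k : ℝ) : AddCircle (1:ℝ)) with hu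
  have hcast : ∀ k : ℕ, ((2^k : ℕ) : ℝ) = 2^k := by intro k; push_cast; ring
  have hu0 : ∀ k, (2^k : ℕ) • u k = 0 := by
    intro k
    rw [hu, ← AddCircle.coe_nsmul]
    have h1 : ((2:ℕ)^k • (1/2^k : ℝ)) = 1 := by
      rw [nsmul_eq_mul, hcast k]
      norm_num
    rw [h1]
    exact AddCircle.coe_period (p := (1:ℝ))
  have hgu : ∀ k, (2^k : ℕ) • g (u k) = 0 := by
    intro k; rw [← map_nsmul, hu0, map_zero]
  have hpos : ∀ k : ℕ, 0 < 2^k := fun k => Nat.pow_pos (by norm_num)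
  choose j hj habs hnorm using fun k => torsion_rep (hpos k) (hgu k)
  -- divisibility relation
  have hdvd : ∀ k, (2^k : ℤ) ∣ (j (k+1) - j k) := by
    intro k
    have e1 : u k = (2 : ℕ) • u (k+1) := by
      rw [hu, ← AddCircle.coe_nsmul]
      congr 1
      rw [nsmul_eq_mul]
      push_cast
      field_simp
      ring
    have e2 : g (u k) = (2:ℕ) • g (u (k+1)) := by rw [e1, map_nsmul]
    rw [hj k, hj (k+1), ← AddCircle.coe_nsmul] at e2
    have e4 : ((2:ℕ) • ((j (k+1) : ℝ) / ((2^(k+1) : ℕ):ℝ)) : ℝ) = (j (k+1) : ℝ)/((2^k : ℕ):ℝ) := by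
      push_cast [nsmul_eq_mul]
      rw [pow_succ]
      field_simp
    rw [e4] at e2
    have e3 : (((j (k+1) : ℝ)/((2^k : ℕ):ℝ) - (j k : ℝ)/((2^k : ℕ):ℝ) : ℝ) : AddCircle (1:ℝ)) = 0 := by
      rw [AddCircle.coe_sub, ← e2, sub_self]
    obtain ⟨m, hm⟩ := (AddCircle.coe_eq_zero_iff _).mp e3
    rw [zsmul_eq_mul, mul_one] at hm
    have h2k : ((2:ℝ)^k) ≠ 0 := by positivity
    have hR : (j (k+1) : ℝ) - (j k : ℝ) = m * 2^k := by
      rw [hcast] at hm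
      field_simp at hm
      linarith [hm]
    have hZ : j (k+1) - j k = m * 2^k := by exact_mod_cast hR
    exact ⟨m, by rw [hZ]; ring⟩
  -- convergence
  have hulim : Filter.Tendsto u atTop (nhds 0) := by
    have h1 : Filter.Tendsto (fun k : ℕ => (1/2 : ℝ)^k) atTop (nhds 0) :=
      tendsto_pow_atTop_nhds_zero_of_lt_one (by norm_num) (by norm_num)
    have h2 : Filter.Tendsto (fun k : ℕ => ((1/2 : ℝ)^k : ℝ) : ℕ → AddCircle (1:ℝ))
        atTop (nhds ((0:ℝ) : AddCircle (1:ℝ))) :=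
      (AddCircle.continuous_mk' 1).continuousAt.tendsto.comp h1
    have h3 : (fun k : ℕ => (((1/2 : ℝ)^k : ℝ) : AddCircle (1:ℝ))) = u := by
      funext k
      rw [hu]
      norm_num [div_pow]
    rw [h3] at h2
    simpa using h2
  have hglim : Filter.Tendsto (fun k => ‖g (u k)‖) atTop (nhds 0) := by
    have h1 : Filter.Tendsto (fun k => g (u k)) atTop (nhds (g 0)) :=
      (hg.continuousAt.tendsto).comp hulim
    rw [map_zero] at h1
    simpa using h1.norm
  obtain ⟨K, hK⟩ : ∃ K, ∀ k ≥ K, ‖g (u k)‖ < 1/8 :=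
    Filter.eventually_atTop.mp (hglim.eventually (gt_mem_nhds (by norm_num : (0:ℝ) < 1/8)))
  have hsmall : ∀ k ≥ K, |(j k : ℝ)| < 2^k/8 := by
    intro k hk
    have := hK k hk
    rw [hnorm k, hcast] at this
    have h2 : (0:ℝ) < 2^k := by positivity
    rw [div_lt_iff₀ h2] at this
    calc |(j k : ℝ)| < 1/8 * 2^k := this
    _ = 2^k/8 := by ring
  -- stabilization
  have hstep : ∀ k ≥ K, j (k+1) = j k := by
    intro k hk
    have h1 := hsmall k hk
    have h2 := hsmall (k+1) (le_trans hk (Nat.le_succ k))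
    obtain ⟨m, hm⟩ := hdvd k
    have hmR : (j (k+1) : ℝ) - (j k) = 2^k * m := by exact_mod_cast hm
    have habs2 : |(j (k+1) : ℝ) - (j k)| < 2^k := by
      calc |(j (k+1) : ℝ) - (j k)| ≤ |(j (k+1) : ℝ)| + |(j k : ℝ)| := abs_sub _ _
      _ < 2^(k+1)/8 + 2^k/8 := by linarith
      _ < 2^k := by rw [pow_succ]; nlinarith [pow_pos (show (0:ℝ) < 2 by norm_num) k]
    have hm0 : m = 0 := by
      by_contra hm0
      have : (1:ℝ) ≤ |(m:ℝ)| := by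
        have : (1:ℤ) ≤ |m| := Int.one_le_abs hm0
        exact_mod_cast this
      rw [hmR, abs_mul, abs_pow, abs_two] at habs2
      nlinarith [pow_pos (show (0:ℝ) < 2 by norm_num) k]
    rw [hm0] at hm
    omega
  have hconst : ∀ k ≥ K, j k = j K := by
    intro k hk
    induction k, hk using Nat.le_induction with
    | base => rfl
    | succ n hn ih => rw [hstep n hn, ih]
  set c : ℤ := j K with hc
  -- the values on all dyadic generators
  have hkey : ∀ k, g (u k) = (((c : ℝ)/2^k : ℝ) : AddCircle (1:ℝ)) := by
    intro k
    set K' := max k K with hK'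
    have h1 : j K' = c := hconst K' (le_max_right _ _)
    have hkK : k ≤ K' := le_max_left _ _
    have hpow : (2:ℝ)^K' = 2^(K'-k) * 2^k := by rw [← pow_add]; congr 1; omega
    have hreal : (2^(K'-k) : ℕ) • ((1:ℝ)/2^K') = 1/2^k := by
      rw [nsmul_eq_mul]
      push_cast
      rw [mul_one_div, div_eq_div_iff (show (2:ℝ)^K' ≠ 0 by positivity)
        (show (2:ℝ)^k ≠ 0 by positivity), one_mul, hpow]
    have e1 : u k = (2^(K'-k) : ℕ) • u K' := by
      rw [hu, ← AddCircle.coe_nsmul, hreal]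
    have e2 : g (u k) = (2^(K'-k) : ℕ) • g (u K') := by rw [e1, map_nsmul]
    rw [hj K', h1, ← AddCircle.coe_nsmul] at e2
    have hreal2 : (2^(K'-k) : ℕ) • ((c:ℝ)/((2^K' : ℕ):ℝ)) = (c:ℝ)/2^k := by
      rw [nsmul_eq_mul, hcast]
      push_cast
      rw [mul_div_assoc', div_eq_div_iff (show (2:ℝ)^K' ≠ 0 by positivity)
        (show (2:ℝ)^k ≠ 0 by positivity), hpow]
      ring
    rw [e2, hreal2]
  -- g equals multiplication by c, by density of dyadic points
  have hdense : Dense (Set.range fun q : ℤ × ℕ =>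
      (((q.1 : ℝ)/2^q.2 : ℝ) : AddCircle (1:ℝ))) := by
    have hsurj : Function.Surjective ((↑) : ℝ → AddCircle (1:ℝ)) :=
      fun x => Quotient.exists_rep x
    have hdr : DenseRange (fun q : ℤ × ℕ => ((q.1:ℝ)/2^q.2)) := by
      rw [Metric.denseRange_iff]
      intro x ε hε
      obtain ⟨k, hk⟩ := exists_pow_lt_of_lt_one hε (by norm_num : (1/2 : ℝ) < 1)
      refine ⟨(⌊x * 2^k⌋, k), ?_⟩
      have h2 : (0:ℝ) < 2^k := by positivity
      have hfr : x - (⌊x * 2^k⌋ : ℝ)/2^k = Int.fract (x * 2^k) / 2^k := by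
        rw [Int.fract]
        field_simp
      rw [Real.dist_eq, hfr, abs_of_nonneg (div_nonneg (Int.fract_nonneg _) h2.le)]
      calc Int.fract (x * 2^k) / 2^k < 1 / 2^k := by
            gcongr
            · exact Int.fract_lt_one _
      _ = (1/2)^k := by rw [div_pow, one_pow]
      _ < ε := hk
    exact (hsurj.denseRange.comp hdr (AddCircle.continuous_mk' 1) : _)
  have hc2 : Continuous (fun x : AddCircle (1:ℝ) => c • x) := continuous_zsmul c
  have heqon : Set.EqOn ⇑g (fun x => c • x)
      (Set.range fun q : ℤ × ℕ => (((q.1 : ℝ)/2^q.2 : ℝ) : AddCircle (1:ℝ))) := by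
    rintro x ⟨⟨m, k⟩, rfl⟩
    simp only
    have h1 : (((m : ℝ)/2^k : ℝ) : AddCircle (1:ℝ)) = m • u k := by
      rw [hu, ← AddCircle.coe_zsmul]
      congr 1
      rw [zsmul_eq_mul]
      ring
    rw [h1, map_zsmul, hkey k]
    have h2 : u k = ((1/2^k : ℝ) : AddCircle (1:ℝ)) := by rw [hu]
    rw [h2, ← AddCircle.coe_zsmul, ← AddCircle.coe_zsmul, ← AddCircle.coe_zsmul]
    congr 1
    rw [zsmul_eq_mul, zsmul_eq_mul, zsmul_eq_mul]
    ring
  have heq : ∀ x, g x = c • x := fun x => congrFun (hg.ext_on hdense hc2 heqon) x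
  -- nonvanishing of small coercions
  have hne : ∀ r : ℝ, 0 < |r| → |r| < 1 → ((r : ℝ) : AddCircle (1:ℝ)) ≠ 0 := by
    intro r h0 h1 hr
    obtain ⟨m, hm⟩ := (AddCircle.coe_eq_zero_iff _).mp hr
    rw [zsmul_eq_mul, mul_one] at hm
    rcases eq_or_ne m 0 with h | h
    · rw [h] at hm
      simp only [Int.cast_zero] at hm
      rw [← hm] at h0
      simp at h0
    · have h2 : (1:ℝ) ≤ |(m:ℝ)| := by exact_mod_cast Int.one_le_abs h
      rw [hm] at h2
      linarith
  have hc0 : c ≠ 0 := by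
    intro h
    have h1 := heq (u 1)
    rw [h, zero_zsmul] at h1
    have h2 : u 1 = 0 := hinj (h1.trans (map_zero g).symm)
    have h3 : ((1/2^1 : ℝ) : AddCircle (1:ℝ)) ≠ 0 := by
      apply hne <;> rw [abs_of_pos (by norm_num : (0:ℝ) < 1/2^1)] <;> norm_num
    have h4 : u 1 = ((1/2^1 : ℝ) : AddCircle (1:ℝ)) := by rw [hu]
    exact h3 (h4 ▸ h2)
  have hcR : ((c:ℝ)) ≠ 0 := Int.cast_ne_zero.mpr hc0
  have hcu : c = 1 ∨ c = -1 := by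
    have hgx : g (((c:ℝ)⁻¹ : ℝ) : AddCircle (1:ℝ)) = 0 := by
      rw [heq, ← AddCircle.coe_zsmul]
      have h4 : c • ((c:ℝ)⁻¹) = 1 := by rw [zsmul_eq_mul]; field_simp
      rw [h4]
      exact AddCircle.coe_period (p := (1:ℝ))
    have hx0 : (((c:ℝ)⁻¹ : ℝ) : AddCircle (1:ℝ)) = 0 := hinj (by rw [hgx, map_zero])
    obtain ⟨m, hm⟩ := (AddCircle.coe_eq_zero_iff _).mp hx0
    rw [zsmul_eq_mul, mul_one] at hm
    have h5 : c * m = 1 := by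
      have h6 : (c:ℝ) * m = 1 := by rw [hm]; field_simp
      exact_mod_cast h6
    exact Int.isUnit_iff.mp (IsUnit.of_mul_eq_one m h5)
  rcases hcu with h | h
  · left; intro x; rw [heq x, h, one_zsmul]
  · right; intro x; rw [heq x, h, neg_one_zsmul]


/-- Continuous automorphisms of the circle are `x ↦ x` or `x ↦ -x`. -/
lemma circle_aut_classify (g : AddCircle (1:ℝ) ≃+ AddCircle (1:ℝ)) (hg : Continuous g) :
    (∀ x, g x = x) ∨ (∀ x, g x = -x) :=
  circle_hom_classify (g : AddCircle (1:ℝ) →+ AddCircle (1:ℝ)) hg g.injective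

lemma coe_real_ne_zero {r : ℝ} (h0 : 0 < |r|) (h1 : |r| < 1) :
    ((r:ℝ) : AddCircle (1:ℝ)) ≠ 0 := by
  intro hr
  obtain ⟨m, hm⟩ := (AddCircle.coe_eq_zero_iff _).mp hr
  rw [zsmul_eq_mul, mul_one] at hm
  rcases eq_or_ne m 0 with h | h
  · rw [h] at hm
    simp only [Int.cast_zero] at hm
    rw [← hm] at h0
    simp at h0
  · have h2 : (1:ℝ) ≤ |(m:ℝ)| := by exact_mod_cast Int.one_le_abs h
    rw [hm] at h2
    linarith

/-- There are exactly two topological automorphisms of the circle. -/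
lemma circle_aut_card :
    Nat.card {g : AddCircle (1:ℝ) ≃+ AddCircle (1:ℝ) // Continuous g ∧ Continuous g.symm} = 2 ∧
    Finite {g : AddCircle (1:ℝ) ≃+ AddCircle (1:ℝ) // Continuous g ∧ Continuous g.symm} := by
  set x : {g : AddCircle (1:ℝ) ≃+ AddCircle (1:ℝ) // Continuous g ∧ Continuous g.symm} :=
    ⟨AddEquiv.refl _, by simpa using continuous_id, by simpa using continuous_id⟩ with hx
  have hnegsymm : (AddEquiv.neg (AddCircle (1:ℝ))).symm = AddEquiv.neg (AddCircle (1:ℝ)) := by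
    ext t
    simp [AddEquiv.neg]; rfl
  have hnegcont : Continuous ⇑(AddEquiv.neg (AddCircle (1:ℝ))) := by
    have : ⇑(AddEquiv.neg (AddCircle (1:ℝ))) = fun t => -t := by funext t; simp [AddEquiv.neg]; rfl
    rw [this]; exact continuous_neg
  set y : {g : AddCircle (1:ℝ) ≃+ AddCircle (1:ℝ) // Continuous g ∧ Continuous g.symm} :=
    ⟨AddEquiv.neg _, hnegcont, by rw [hnegsymm]; exact hnegcont⟩ with hy
  have hxy : x ≠ y := by
    intro h
    have h2 := congrArg (fun s => s.1 (((4:ℝ)⁻¹ : ℝ) : AddCircle (1:ℝ))) h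
    simp only [hx, hy, AddEquiv.coe_refl, id_eq] at h2
    have h3 : (AddEquiv.neg (AddCircle (1:ℝ))) (((4:ℝ)⁻¹ : ℝ) : AddCircle (1:ℝ))
        = -(((4:ℝ)⁻¹ : ℝ) : AddCircle (1:ℝ)) := by simp [AddEquiv.neg]; rfl
    rw [h3] at h2
    have h4 : (((2:ℝ)⁻¹ : ℝ) : AddCircle (1:ℝ)) = 0 := by
      have h5 := congrArg (fun z => z + (((4:ℝ)⁻¹ : ℝ) : AddCircle (1:ℝ))) h2
      simp only [neg_add_cancel] at h5
      rw [← AddCircle.coe_add, show ((4:ℝ)⁻¹ + (4:ℝ)⁻¹ : ℝ) = (2:ℝ)⁻¹ by norm_num] at h5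
      exact h5
    have habs : |(2:ℝ)⁻¹| = 2⁻¹ := abs_of_pos (by norm_num)
    exact coe_real_ne_zero (by rw [habs]; norm_num) (by rw [habs]; norm_num) h4
  have hclass : ∀ z : {g : AddCircle (1:ℝ) ≃+ AddCircle (1:ℝ) //
      Continuous g ∧ Continuous g.symm}, z = x ∨ z = y := by
    intro z
    rcases circle_aut_classify z.1 z.2.1 with h | h
    · left
      apply Subtype.ext
      exact AddEquiv.ext fun t => by rw [h t]; rfl
    · right
      apply Subtype.ext
      refine AddEquiv.ext fun t => ?_
      rw [h t]
      simp [hy, AddEquiv.neg]; rfl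
  have huniv : ({x, y} : Set {g : AddCircle (1:ℝ) ≃+ AddCircle (1:ℝ) //
      Continuous g ∧ Continuous g.symm}) = Set.univ := by
    apply Set.eq_univ_iff_forall.mpr
    intro z
    rcases hclass z with h | h <;> simp [h]
  constructor
  · exact Nat.card_eq_two_iff.mpr ⟨x, y, hxy, huniv⟩
  · exact Set.finite_univ_iff.mp (huniv ▸ Set.toFinite _)

/-! Counting homomorphisms from a finite abelian group to the circle. -/

noncomputable def circleAddEquiv : AddCircle (1:ℝ) ≃+ Additive Circle where
  toFun x := Additive.ofMul (AddCircle.toCircle x)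
  invFun c := (AddCircle.homeomorphCircle (one_ne_zero : (1:ℝ) ≠ 0)).symm (Additive.toMul c)
  left_inv x := by
    have h := (AddCircle.homeomorphCircle (one_ne_zero : (1:ℝ) ≠ 0)).symm_apply_apply x
    rwa [AddCircle.homeomorphCircle_apply] at h
  right_inv c := by
    have h := (AddCircle.homeomorphCircle (one_ne_zero : (1:ℝ) ≠ 0)).apply_symm_apply
      (Additive.toMul c)
    rw [AddCircle.homeomorphCircle_apply] at h
    simp [h]
  map_add' := AddCircle.toCircle_add

noncomputable def homCircleEquiv (A : Type*) [AddCommGroup A] :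
    (A →+ AddCircle (1:ℝ)) ≃ AddChar A Circle :=
  (circleAddEquiv.addMonoidHomCongrRight (M := A)).toEquiv.trans
    AddChar.toAddMonoidHomEquiv.symm

lemma card_hom_circle (A : Type*) [AddCommGroup A] [Finite A] :
    Nat.card (A →+ AddCircle (1:ℝ)) = Nat.card A ∧ Finite (A →+ AddCircle (1:ℝ)) := by
  have e : (A →+ AddCircle (1:ℝ)) ≃ AddChar A ℂ :=
    (homCircleEquiv A).trans (AddChar.circleEquivComplex).toEquiv
  haveI : Fintype A := Fintype.ofFinite A
  constructor
  · rw [Nat.card_congr e, Nat.card_eq_fintype_card, Nat.card_eq_fintype_card, AddChar.card_eq]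
  · exact Finite.of_equiv _ e.symm

/-! Decomposition of topological automorphisms of `A × circle`. -/

section Decomp

variable {A : Type*} [AddCommGroup A] [TopologicalSpace A] [DiscreteTopology A]

lemma fst_apply_zero_eq_zero (f : (A × AddCircle (1:ℝ)) ≃+ (A × AddCircle (1:ℝ)))
    (hf : Continuous f) (t : AddCircle (1:ℝ)) : (f (0, t)).1 = 0 := by
  have hcont : Continuous (fun t : AddCircle (1:ℝ) => (f (0, t)).1) :=
    continuous_fst.comp (hf.comp (Continuous.prodMk_right 0))
  have hlc := (IsLocallyConstant.iff_continuous (fun t : AddCircle (1:ℝ) => (f (0, t)).1)).mpr hcont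
  have h := hlc.apply_eq_of_preconnectedSpace t 0
  rw [show ((0:A), (0:AddCircle (1:ℝ))) = (0 : A × AddCircle (1:ℝ)) from rfl, map_zero] at h
  simpa using h

lemma aut_decomp (f : (A × AddCircle (1:ℝ)) ≃+ (A × AddCircle (1:ℝ)))
    (hf : Continuous f) (p : A × AddCircle (1:ℝ)) :
    f p = ((f (p.1, 0)).1, (f (p.1, 0)).2 + (f (0, p.2)).2) := by
  have h2 : f p = f (p.1, 0) + f (0, p.2) := by
    rw [← map_add]
    congr 1
    ext <;> simp
  rw [h2]
  have h3 := fst_apply_zero_eq_zero f hf p.2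
  apply Prod.ext
  · simp [h3]
  · rfl

/-- Reconstruction of an automorphism of `A × circle` from its three components. -/
noncomputable def buildAut (α : A ≃+ A) (φ : A →+ AddCircle (1:ℝ)) (h : AddCircle (1:ℝ) ≃+ AddCircle (1:ℝ)) :
    (A × AddCircle (1:ℝ)) ≃+ (A × AddCircle (1:ℝ)) where
  toFun p := (α p.1, φ p.1 + h p.2)
  invFun p := (α.symm p.1, h.symm (p.2 - φ (α.symm p.1)))
  left_inv p := by
    obtain ⟨a, t⟩ := p
    simp
  right_inv p := by
    obtain ⟨a, t⟩ := p
    simp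
  map_add' p q := by
    obtain ⟨a, t⟩ := p
    obtain ⟨b, s⟩ := q
    apply Prod.ext
    · simp
    · simp only [Prod.snd_add, Prod.fst_add, map_add, Prod.mk_add_mk]
      abel

lemma buildAut_continuous (α : A ≃+ A) (φ : A →+ AddCircle (1:ℝ))
    (h : AddCircle (1:ℝ) ≃+ AddCircle (1:ℝ)) (hh : Continuous h) :
    Continuous (buildAut α φ h) := by
  apply Continuous.prodMk
  · exact (continuous_of_discreteTopology (f := ⇑α)).comp continuous_fst
  · exact ((continuous_of_discreteTopology (f := ⇑φ)).comp continuous_fst).add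
      (hh.comp continuous_snd)

lemma buildAut_symm_continuous (α : A ≃+ A) (φ : A →+ AddCircle (1:ℝ))
    (h : AddCircle (1:ℝ) ≃+ AddCircle (1:ℝ)) (hh : Continuous h.symm) :
    Continuous (buildAut α φ h).symm := by
  apply Continuous.prodMk
  · exact (continuous_of_discreteTopology (f := ⇑α.symm)).comp continuous_fst
  · exact hh.comp (continuous_snd.sub
      ((continuous_of_discreteTopology (f := ⇑φ ∘ ⇑α.symm)).comp continuous_fst))

/-- The `A`-component automorphism. -/
noncomputable def autOf (f : (A × AddCircle (1:ℝ)) ≃+ (A × AddCircle (1:ℝ)))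
    (hf : Continuous f) (hf' : Continuous f.symm) : A ≃+ A where
  toFun a := (f (a, 0)).1
  invFun a := (f.symm (a, 0)).1
  left_inv a := by
    show (f.symm ((f (a, 0)).1, 0)).1 = a
    have h1 : (((f (a, 0)).1 : A), (0:AddCircle (1:ℝ))) = f (a, 0) - (0, (f (a, 0)).2) := by
      ext <;> simp
    rw [h1, map_sub]
    have h2 := fst_apply_zero_eq_zero f.symm hf' (f (a, 0)).2
    show (f.symm (f (a, 0))).1 - (f.symm (0, (f (a, 0)).2)).1 = a
    rw [h2, sub_zero, f.symm_apply_apply]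
  right_inv a := by
    show (f ((f.symm (a, 0)).1, 0)).1 = a
    have h1 : (((f.symm (a, 0)).1 : A), (0:AddCircle (1:ℝ)))
        = f.symm (a, 0) - (0, (f.symm (a, 0)).2) := by ext <;> simp
    rw [h1, map_sub]
    have h2 := fst_apply_zero_eq_zero f hf (f.symm (a, 0)).2
    show (f (f.symm (a, 0))).1 - (f (0, (f.symm (a, 0)).2)).1 = a
    rw [h2, sub_zero, f.apply_symm_apply]
  map_add' a b := by
    show (f (a + b, 0)).1 = (f (a, 0)).1 + (f (b, 0)).1
    have h1 : ((a + b : A), (0:AddCircle (1:ℝ))) = (a, 0) + (b, 0) := by simp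
    rw [h1, map_add]
    rfl


noncomputable def circOf (f : (A × AddCircle (1:ℝ)) ≃+ (A × AddCircle (1:ℝ)))
    (hf : Continuous f) (hf' : Continuous f.symm) :
    AddCircle (1:ℝ) ≃+ AddCircle (1:ℝ) where
  toFun t := (f (0, t)).2
  invFun t := (f.symm (0, t)).2
  left_inv t := by
    show (f.symm (0, (f (0, t)).2)).2 = t
    have h0 : ((0:A), (f (0, t)).2) = f (0, t) := by
      ext
      · exact (fst_apply_zero_eq_zero f hf t).symm
      · rfl
    rw [h0, f.symm_apply_apply]
  right_inv t := by
    show (f (0, (f.symm (0, t)).2)).2 = t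
    have h0 : ((0:A), (f.symm (0, t)).2) = f.symm (0, t) := by
      ext
      · exact (fst_apply_zero_eq_zero f.symm hf' t).symm
      · rfl
    rw [h0, f.apply_symm_apply]
  map_add' s t := by
    show (f (0, s + t)).2 = (f (0, s)).2 + (f (0, t)).2
    have h1 : ((0:A), s + t) = ((0:A), s) + ((0:A), t) := by simp
    rw [h1, map_add]
    rfl

lemma circOf_continuous (f : (A × AddCircle (1:ℝ)) ≃+ (A × AddCircle (1:ℝ)))
    (hf : Continuous f) (hf' : Continuous f.symm) : Continuous (circOf f hf hf') :=
  continuous_snd.comp (hf.comp (Continuous.prodMk_right 0))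

lemma circOf_symm_continuous (f : (A × AddCircle (1:ℝ)) ≃+ (A × AddCircle (1:ℝ)))
    (hf : Continuous f) (hf' : Continuous f.symm) : Continuous (circOf f hf hf').symm :=
  continuous_snd.comp (hf'.comp (Continuous.prodMk_right 0))

noncomputable def homOf (f : (A × AddCircle (1:ℝ)) ≃+ (A × AddCircle (1:ℝ))) :
    A →+ AddCircle (1:ℝ) where
  toFun a := (f (a, 0)).2
  map_zero' := by
    show (f (0, 0)).2 = 0
    rw [show ((0:A), (0:AddCircle (1:ℝ))) = 0 from rfl, map_zero]
    rfl
  map_add' a b := by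
    show (f (a + b, 0)).2 = (f (a, 0)).2 + (f (b, 0)).2
    rw [show ((a + b : A), (0:AddCircle (1:ℝ))) = (a, 0) + (b, 0) by simp, map_add]
    rfl

end Decomp

/-- Let `A` be a finite abelian group with the discrete topology and `T = ℝ/ℤ` the
circle group. The group of topological automorphisms of the compact abelian group
`C = A × T` (continuous group automorphisms with continuous inverse) is finite of
cardinality `2 * |Aut A| * |A|`. -/
theorem card_topological_automorphisms_of_finite_times_circle
    (A : Type*) [AddCommGroup A] [Finite A] [TopologicalSpace A] [DiscreteTopology A] :
    Finite {f : (A × AddCircle (1 : ℝ)) ≃+ (A × AddCircle (1 : ℝ)) //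
        Continuous f ∧ Continuous f.symm} ∧
    Nat.card {f : (A × AddCircle (1 : ℝ)) ≃+ (A × AddCircle (1 : ℝ)) //
        Continuous f ∧ Continuous f.symm}
      = 2 * Nat.card (A ≃+ A) * Nat.card A := by
  haveI : Finite (A ≃+ A) := Finite.of_injective (fun e => (⇑e : A → A)) DFunLike.coe_injective
  obtain ⟨hSTcard, hSTfin⟩ := circle_aut_card
  obtain ⟨hHomcard, hHomfin⟩ := card_hom_circle A
  haveI := hSTfin
  haveI := hHomfin
  let e : {f : (A × AddCircle (1 : ℝ)) ≃+ (A × AddCircle (1 : ℝ)) //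
        Continuous f ∧ Continuous f.symm} ≃
      ((A ≃+ A) × (A →+ AddCircle (1:ℝ)) ×
        {g : AddCircle (1:ℝ) ≃+ AddCircle (1:ℝ) // Continuous g ∧ Continuous g.symm}) :=
    { toFun := fun f => (autOf f.1 f.2.1 f.2.2, homOf f.1,
        ⟨circOf f.1 f.2.1 f.2.2, circOf_continuous f.1 f.2.1 f.2.2,
          circOf_symm_continuous f.1 f.2.1 f.2.2⟩)
      invFun := fun x => ⟨buildAut x.1 x.2.1 x.2.2.1,
        buildAut_continuous x.1 x.2.1 x.2.2.1 x.2.2.2.1,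
        buildAut_symm_continuous x.1 x.2.1 x.2.2.1 x.2.2.2.2⟩
      left_inv := fun f => by
        apply Subtype.ext
        apply AddEquiv.ext
        intro p
        exact (aut_decomp f.1 f.2.1 p).symm
      right_inv := fun x => by
        obtain ⟨α, φ, g, hg⟩ := x
        refine Prod.ext ?_ (Prod.ext ?_ ?_)
        · exact AddEquiv.ext fun a => rfl
        · refine AddMonoidHom.ext fun a => ?_
          show φ a + g 0 = φ a
          rw [map_zero, add_zero]
        · apply Subtype.ext
          refine AddEquiv.ext fun t => ?_
          show φ 0 + g t = g t
          rw [map_zero, zero_add] }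
  constructor
  · exact Finite.of_equiv _ e.symm
  · rw [Nat.card_congr e, Nat.card_prod, Nat.card_prod, hHomcard, hSTcard]
    ring
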